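/- Let F be a finite field and let c, k, d be natural numbers with 2 ≤ c ≤ k < d and |F| ≥ C(d−1, c−1). Suppose φ₁, …, φ_k are vectors in F^c such that every c of them are linearly independent (hence form a basis of F^c). Then there exists a vector φ ∈ F^c such that every c vectors among φ₁, …, φ_k, φ are linearly independent. -/

import Mathlib

/-- Let `F` be a finite field and `c, k, d` natural numbers with
`2 ≤ c ≤ k < d` and `|F| ≥ C(d−1, c−1)`. Suppose `φ₁, …, φ_k ∈ F^c` are such that every
`c` of them are linearly independent (hence form a basis of `F^c`). Then there exists a
vector `φ ∈ F^c` such that every `c` vectors among `φ₁, …, φ_k, φ` are linearly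
independent. -/
theorem exists_vector_extending_generic_family
    (F : Type*) [Field F] [Fintype F]
    (c k d : ℕ) (hc : 2 ≤ c) (hck : c ≤ k) (hkd : k < d)
    (hF : Nat.choose (d - 1) (c - 1) ≤ Fintype.card F)
    (φ : Fin k → (Fin c → F))
    (hφ : ∀ s : Finset (Fin k), s.card = c →
        LinearIndependent F (fun i : s => φ i.1)) :
    ∃ v : Fin c → F, ∀ s : Finset (Fin (k + 1)), s.card = c →
        LinearIndependent F (fun i : s => (Fin.snoc φ v : Fin (k + 1) → Fin c → F) i.1) := by
  classical
  set q := Fintype.card F with hq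
  have hq2 : 2 ≤ q := Fintype.one_lt_card
  -- ### Step 1: count the bad vectors and choose `v` outside all spans
  have hkd1 : k ≤ d - 1 := Nat.le_sub_one_of_lt hkd
  have hchoose : Nat.choose k (c - 1) ≤ q := le_trans (Nat.choose_le_choose _ hkd1) hF
  set T : Finset (Finset (Fin k)) := Finset.powersetCard (c - 1) Finset.univ with hT
  have hTcard : T.card ≤ q := by
    rw [hT, Finset.card_powersetCard, Finset.card_univ, Fintype.card_fin]
    exact hchoose
  have hspan_card : ∀ t : Finset (Fin k), t ∈ T →
      (Submodule.span F (φ '' ↑t) : Set (Fin c → F)).toFinset.card ≤ q ^ (c - 1) := by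
    intro t ht
    rw [Finset.mem_powersetCard] at ht
    rw [Set.toFinset_card]
    have h1 : Fintype.card (Submodule.span F (φ '' ↑t) : Set (Fin c → F)) =
        Fintype.card (Submodule.span F (φ '' ↑t)) :=
      Fintype.card_congr (Equiv.subtypeEquivRight fun x => Iff.rfl)
    rw [h1, Module.card_eq_pow_finrank (K := F)]
    apply Nat.pow_le_pow_right (by omega)
    have h2 : (φ '' ↑t) = ↑(t.image φ) := by rw [Finset.coe_image]
    rw [h2]
    have h3 := finrank_span_finset_le_card (R := F) (t.image φ)
    have h4 : (t.image φ).card ≤ c - 1 := ht.2 ▸ Finset.card_image_le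
    exact le_trans h3 h4
  set Bad : Finset (Fin c → F) :=
    T.biUnion (fun t => (Submodule.span F (φ '' ↑t) : Set (Fin c → F)).toFinset \ {0})
      with hBad
  have hBadCard : (insert 0 Bad).card < q ^ c := by
    have h1 : Bad.card ≤ T.card * (q ^ (c - 1) - 1) := by
      calc Bad.card ≤ ∑ t ∈ T,
            ((Submodule.span F (φ '' ↑t) : Set (Fin c → F)).toFinset \ {0}).card :=
            Finset.card_biUnion_le
        _ ≤ ∑ _t ∈ T, (q ^ (c - 1) - 1) := by
            apply Finset.sum_le_sum
            intro t ht
            have h0 : ({0} : Finset (Fin c → F)) ⊆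
                (Submodule.span F (φ '' ↑t) : Set (Fin c → F)).toFinset := by
              intro x hx
              simp only [Finset.mem_singleton] at hx
              subst hx
              simp only [Set.mem_toFinset, SetLike.mem_coe]
              exact Submodule.zero_mem _
            rw [Finset.card_sdiff_of_subset h0, Finset.card_singleton]
            exact Nat.sub_le_sub_right (hspan_card t ht) 1
        _ = T.card * (q ^ (c - 1) - 1) := by rw [Finset.sum_const, smul_eq_mul]
    have h2 : T.card * (q ^ (c - 1) - 1) ≤ q * (q ^ (c - 1) - 1) :=
      Nat.mul_le_mul_right _ hTcard
    have h3 : q * (q ^ (c - 1) - 1) + q * 1 = q * q ^ (c - 1) := by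
      rw [← Nat.mul_add]
      congr 1
      have : 1 ≤ q ^ (c - 1) := Nat.one_le_pow _ _ (by omega)
      omega
    have h4 : q * q ^ (c - 1) = q ^ c := by
      rw [← pow_succ']
      congr 1
      omega
    have h5 : (insert 0 Bad).card ≤ Bad.card + 1 := Finset.card_insert_le _ _
    omega
  obtain ⟨v, hv⟩ : ∃ v : Fin c → F, v ∉ insert 0 Bad := by
    by_contra h
    push_neg at h
    have huniv : (Finset.univ : Finset (Fin c → F)) ⊆ insert 0 Bad := fun x _ => h x
    have := Finset.card_le_card huniv
    rw [Finset.card_univ, Fintype.card_fun, Fintype.card_fin] at this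
    have hqq : Fintype.card F ^ c = q ^ c := rfl
    omega
  have hv' : ∀ t : Finset (Fin k), t.card = c - 1 →
      v ∉ Submodule.span F (φ '' ↑t) := by
    intro t ht hmem
    apply hv
    rcases eq_or_ne v 0 with rfl | hv0
    · exact Finset.mem_insert_self _ _
    · refine Finset.mem_insert_of_mem (Finset.mem_biUnion.mpr ⟨t, ?_, ?_⟩)
      · exact Finset.mem_powersetCard.mpr ⟨Finset.subset_univ _, ht⟩
      · rw [Finset.mem_sdiff]
        exact ⟨Set.mem_toFinset.mpr hmem, by simpa using hv0⟩
  refine ⟨v, ?_⟩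
  -- ### Step 2: linear independence machinery
  -- every finset of `Fin k` of card ≤ c indexes a linearly independent subfamily
  have hLI : ∀ t : Finset (Fin k), t.card ≤ c → LinearIndependent F (fun j : t => φ j.1) := by
    intro t ht
    obtain ⟨t'', htt, _, ht''⟩ := Finset.exists_subsuperset_card_eq (Finset.subset_univ t) ht
      (by rw [Finset.card_univ, Fintype.card_fin]; exact hck)
    have h := hφ t'' ht''
    exact h.comp (fun j : {x // x ∈ t} => (⟨j.1, htt j.2⟩ : {x // x ∈ t''}))
      (fun a b hab => Subtype.ext (congrArg (fun x : {x // x ∈ t''} => x.1) hab))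
  -- finsets of `Fin (k+1)` avoiding `Fin.last k` come from finsets of `Fin k`
  have hup : ∀ u : Finset (Fin (k + 1)), Fin.last k ∉ u →
      ∃ t : Finset (Fin k), t.card = u.card ∧ u = t.image Fin.castSucc := by
    intro u hu
    refine ⟨u.attach.image (fun i => (i.1).castPred (fun h => hu (h ▸ i.2))), ?_, ?_⟩
    · rw [Finset.card_image_of_injOn, Finset.card_attach]
      intro a _ b _ hab
      apply Subtype.ext
      have := congrArg Fin.castSucc hab
      rwa [Fin.castSucc_castPred, Fin.castSucc_castPred] at this
    · ext i
      simp only [Finset.mem_image, Finset.mem_attach, true_and, Subtype.exists]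
      constructor
      · intro hi
        exact ⟨(⟨i, hi⟩ : {x // x ∈ u}).1.castPred (fun h => hu (h ▸ hi)), ⟨i, hi, rfl⟩,
          Fin.castSucc_castPred _ _⟩
      · rintro ⟨j, ⟨a, ha, rfl⟩, rfl⟩
        rwa [Fin.castSucc_castPred]
  -- linear independence for any small finset avoiding `Fin.last k`
  have hLIu : ∀ u : Finset (Fin (k + 1)), Fin.last k ∉ u → u.card ≤ c →
      LinearIndependent F (fun i : u => (Fin.snoc φ v : Fin (k + 1) → Fin c → F) i.1) := by
    intro u hu huc
    obtain ⟨t, htc, rfl⟩ := hup u hu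
    have hbij : Function.Bijective
        (fun j : {x // x ∈ t} =>
          (⟨Fin.castSucc j.1, Finset.mem_image_of_mem _ j.2⟩ :
            {x // x ∈ t.image Fin.castSucc})) := by
      constructor
      · intro a b hab
        exact Subtype.ext (Fin.castSucc_injective _ (congrArg Subtype.val hab))
      · rintro ⟨i, hi⟩
        obtain ⟨j, hj, rfl⟩ := Finset.mem_image.mp hi
        exact ⟨⟨j, hj⟩, rfl⟩
    apply (linearIndependent_equiv (Equiv.ofBijective _ hbij)).mp
    have hcomp : ((fun i : {x // x ∈ t.image Fin.castSucc} =>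
        (Fin.snoc φ v : Fin (k + 1) → Fin c → F) i.1) ∘ (Equiv.ofBijective _ hbij)) =
        fun j : t => φ j.1 := by
      funext j
      simp only [Function.comp_apply, Equiv.ofBijective_apply]
      exact Fin.snoc_castSucc _ _ _
    rw [hcomp]
    exact hLI t (htc ▸ huc)
  -- ### Step 3: conclude
  intro s hs
  by_cases hlast : Fin.last k ∈ s
  · -- `s` contains the new index; use `linearIndependent_insert'`
    have hs' : (↑s : Set (Fin (k + 1))) =
        insert (Fin.last k) ↑(s.erase (Fin.last k)) := by
      rw [← Finset.coe_insert, Finset.insert_erase hlast]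
    show LinearIndependent F
      (fun i : (↑s : Set (Fin (k + 1))) => (Fin.snoc φ v : Fin (k + 1) → Fin c → F) i.1)
    rw [hs']
    have has : Fin.last k ∉ (↑(s.erase (Fin.last k)) : Set (Fin (k + 1))) := by simp
    apply (linearIndepOn_insert has).mpr
    have hcard : (s.erase (Fin.last k)).card = c - 1 := by
      rw [Finset.card_erase_of_mem hlast, hs]
    have hnotmem : Fin.last k ∉ s.erase (Fin.last k) := Finset.notMem_erase _ _
    constructor
    · exact hLIu (s.erase (Fin.last k)) hnotmem (by omega)
    · obtain ⟨t, htc, heq⟩ := hup (s.erase (Fin.last k)) hnotmem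
      have himg : (Fin.snoc φ v : Fin (k + 1) → Fin c → F) '' ↑(s.erase (Fin.last k)) =
          φ '' ↑t := by
        rw [heq, Finset.coe_image, ← Set.image_comp]
        have hco : (Fin.snoc φ v : Fin (k + 1) → Fin c → F) ∘ Fin.castSucc = φ :=
          funext (fun j => Fin.snoc_castSucc _ _ _)
        rw [hco]
      rw [himg, Fin.snoc_last]
      exact hv' t (by omega)
  · -- `s` avoids the new index
    exact hLIu s hlast (le_of_eq hs)
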